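/- Let n₁ > 1 and n₂ ≥ 1, and let G be the graph obtained from the complete bipartite graph K_{n₁,n₂} by adding one edge e₁ joining two vertices in the bipartite block of size n₁. Then a(G) = a(K_{n₁,n₂}) + a(K_{n₁−1,n₂}). -/

import Mathlib

/-- An orientation of a simple graph `G`, encoded as a function `f` where `f u v = true`
means the edge `{u,v}` is directed from `u` to `v`. Every edge gets exactly one direction,
and non-edges carry no direction. -/
def IsOrientation {V : Type*} (G : SimpleGraph V) (f : V → V → Bool) : Prop :=
  (∀ u v, G.Adj u v → f u v = !f v u) ∧ ∀ u v, ¬ G.Adj u v → f u v = false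

/-- The directed graph given by `f` contains no directed cycle. -/
def OrientAcyclic {V : Type*} (f : V → V → Bool) : Prop :=
  ∀ v, ¬ Relation.TransGen (fun a b => f a b = true) v v

/-- The number of acyclic orientations of `G`. -/
noncomputable def numAcyclicOrientations {V : Type*} (G : SimpleGraph V) : ℕ :=
  Nat.card {f : V → V → Bool // IsOrientation G f ∧ OrientAcyclic f}

/-- The Stirling number of the second kind `S(n,k)`: the number of partitions of an
`n`-element set into `k` non-empty parts. -/
noncomputable def stirling2 (n k : ℕ) : ℕ :=
  Nat.card {P : Finpartition (Finset.univ : Finset (Fin n)) // P.parts.card = k}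

namespace AO

open Sum Finset

lemma acyclic_of_potential {α : Type*} (f : α → α → Bool) (φ : α → ℕ)
    (h : ∀ u v, f u v = true → φ v < φ u) : OrientAcyclic f := by
  intro v hv
  have key : ∀ a b, Relation.TransGen (fun a b => f a b = true) a b → φ b < φ a := by
    intro a b hab
    induction hab with
    | single h1 => exact h _ _ h1
    | tail _ h1 ih => exact (h _ _ h1).trans ih
  exact absurd (key v v hv) (lt_irrefl _)

variable {n₁ n₂ : ℕ}

def Chain (S : Fin n₁ → Finset (Fin n₂)) : Prop :=
  ∀ a a', S a ⊆ S a' ∨ S a' ⊆ S a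

instance (S : Fin n₁ → Finset (Fin n₂)) : Decidable (Chain S) := by
  unfold Chain; infer_instance

def mfun (S : Fin n₁ → Finset (Fin n₂)) (b : Fin n₂) : ℕ :=
  Finset.univ.sup fun a => if b ∈ S a then 0 else (S a).card

lemma mfun_lt {S : Fin n₁ → Finset (Fin n₂)} (hS : Chain S) {a : Fin n₁} {b : Fin n₂}
    (hb : b ∈ S a) : mfun S b < (S a).card := by
  have hpos : 0 < (S a).card := Finset.card_pos.mpr ⟨b, hb⟩
  rw [mfun, Finset.sup_lt_iff hpos]
  intro a' _
  by_cases h' : b ∈ S a'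
  · simpa [h'] using hpos
  · simp only [h', if_false]
    have hsub : S a' ⊆ S a := by
      rcases hS a a' with h | h
      · exact absurd (h hb) h'
      · exact h
    exact Finset.card_lt_card ((Finset.ssubset_iff_of_subset hsub).mpr ⟨b, hb, h'⟩)

lemma le_mfun {S : Fin n₁ → Finset (Fin n₂)} {a : Fin n₁} {b : Fin n₂}
    (hb : b ∉ S a) : (S a).card ≤ mfun S b := by
  have := Finset.le_sup (f := fun a => if b ∈ S a then 0 else (S a).card)
    (Finset.mem_univ a)
  simpa [hb, mfun] using this

end AO

namespace AO
open Sum Finset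

variable {n₁ n₂ : ℕ}

abbrev V (n₁ n₂ : ℕ) := Fin n₁ ⊕ Fin n₂

def Sof (f : V n₁ n₂ → V n₁ n₂ → Bool) (a : Fin n₁) : Finset (Fin n₂) :=
  Finset.univ.filter fun b => f (inl a) (inr b) = true

@[simp] lemma mem_Sof {f : V n₁ n₂ → V n₁ n₂ → Bool} {a : Fin n₁} {b : Fin n₂} :
    b ∈ Sof f a ↔ f (inl a) (inr b) = true := by simp [Sof]

variable (a₁ a₂ : Fin n₁)

def mkOr (S : Fin n₁ → Finset (Fin n₂)) (d : Bool) : V n₁ n₂ → V n₁ n₂ → Bool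
  | inl a, inr b => decide (b ∈ S a)
  | inr b, inl a => !decide (b ∈ S a)
  | inl a, inl a' => if a = a₁ ∧ a' = a₂ then d else if a = a₂ ∧ a' = a₁ then !d else false
  | inr _, inr _ => false

def mkOrK (S : Fin n₁ → Finset (Fin n₂)) : V n₁ n₂ → V n₁ n₂ → Bool
  | inl a, inr b => decide (b ∈ S a)
  | inr b, inl a => !decide (b ∈ S a)
  | inl _, inl _ => false
  | inr _, inr _ => false


-- cycle construction for any f that matches S on cross edges
lemma not_acyclic_of_not_chain {S : Fin n₁ → Finset (Fin n₂)}
    {f : V n₁ n₂ → V n₁ n₂ → Bool}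
    (h1 : ∀ a b, b ∈ S a → f (inl a) (inr b) = true)
    (h2 : ∀ a b, b ∉ S a → f (inr b) (inl a) = true)
    (hS : ¬ Chain S) : ¬ OrientAcyclic f := by
  intro hacy
  rw [Chain] at hS
  push_neg at hS
  obtain ⟨a, a', hna, hna'⟩ := hS
  rw [Finset.not_subset] at hna hna'
  obtain ⟨b, hb1, hb2⟩ := hna
  obtain ⟨b', hb1', hb2'⟩ := hna'
  have s1 : Relation.TransGen (fun u v : V n₁ n₂ => f u v = true) (inl a) (inr b) :=
    Relation.TransGen.single (h1 a b hb1)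
  have s2 : Relation.TransGen (fun u v : V n₁ n₂ => f u v = true) (inl a) (inl a') :=
    s1.tail (h2 a' b hb2)
  have s3 : Relation.TransGen (fun u v : V n₁ n₂ => f u v = true) (inl a) (inr b') :=
    s2.tail (h1 a' b' hb1')
  exact hacy (inl a) (s3.tail (h2 a b' hb2'))

lemma acyclic_mkOr {S : Fin n₁ → Finset (Fin n₂)} {d : Bool} (ha : a₁ ≠ a₂)
    (hS : Chain S) (hd : if d then S a₂ ⊆ S a₁ else S a₁ ⊆ S a₂) :
    OrientAcyclic (mkOr a₁ a₂ S d) := by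
  apply acyclic_of_potential _ (Sum.elim
    (fun a => 4 * (S a).card + (if (d = true ∧ a = a₁) ∨ (¬(d = true) ∧ a = a₂) then 1 else 0))
    (fun b => 4 * mfun S b + 2))
  have hind : ∀ a : Fin n₁,
      (if (d = true ∧ a = a₁) ∨ (¬(d = true) ∧ a = a₂) then 1 else 0) ≤ 1 := by
    intro a; split <;> omega
  rintro (a | b) (a' | b') hf
  · -- inl a → inl a'
    simp only [mkOr] at hf
    split_ifs at hf with hc1 hc2
    · obtain ⟨rfl, rfl⟩ := hc1
      rw [if_pos hf] at hd
      have hcard : (S a').card ≤ (S a).card := Finset.card_le_card hd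
      simp only [Sum.elim_inl]
      split_ifs <;> simp_all <;> omega
    · obtain ⟨rfl, rfl⟩ := hc2
      rw [Bool.not_eq_true'] at hf
      rw [hf, if_neg (by simp)] at hd
      have hcard : (S a').card ≤ (S a).card := Finset.card_le_card hd
      simp only [Sum.elim_inl]
      split_ifs <;> simp_all <;> omega
  · -- inl a → inr b
    simp only [mkOr, decide_eq_true_eq] at hf
    have := mfun_lt hS hf
    have := hind a
    simp only [Sum.elim_inl, Sum.elim_inr]
    omega
  · -- inr b → inl a'
    simp only [mkOr, Bool.not_eq_true', decide_eq_false_iff_not] at hf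
    have := le_mfun hf
    have := hind a'
    simp only [Sum.elim_inl, Sum.elim_inr]
    omega
  · simp [mkOr] at hf

end AO

namespace AO
open Sum Finset

variable {n₁ n₂ : ℕ} (a₁ a₂ : Fin n₁)

lemma adj_G {ha : a₁ ≠ a₂} (u v : V n₁ n₂) :
    (completeBipartiteGraph (Fin n₁) (Fin n₂) ⊔
      SimpleGraph.fromEdgeSet {s(Sum.inl a₁, Sum.inl a₂)}).Adj u v ↔
    (∃ a b, u = inl a ∧ v = inr b) ∨ (∃ a b, u = inr b ∧ v = inl a) ∨
      (u = inl a₁ ∧ v = inl a₂) ∨ (u = inl a₂ ∧ v = inl a₁) := by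
  rcases u with a | b <;> rcases v with a' | b' <;>
    simp [completeBipartiteGraph_adj, Sym2.eq_iff, ha, ha.symm, and_comm]
  rintro (⟨rfl, rfl⟩ | ⟨rfl, rfl⟩)
  exacts [ha, ha.symm]

lemma adj_G_inl_inl (ha : a₁ ≠ a₂) (a a' : Fin n₁) :
    (completeBipartiteGraph (Fin n₁) (Fin n₂) ⊔
      SimpleGraph.fromEdgeSet {s(Sum.inl a₁, Sum.inl a₂)}).Adj (inl a) (inl a') ↔
    (a = a₁ ∧ a' = a₂) ∨ (a = a₂ ∧ a' = a₁) := by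
  rw [adj_G a₁ a₂ (ha := ha)]
  simp

lemma adj_G_inl_inr (ha : a₁ ≠ a₂) (a : Fin n₁) (b : Fin n₂) :
    (completeBipartiteGraph (Fin n₁) (Fin n₂) ⊔
      SimpleGraph.fromEdgeSet {s(Sum.inl a₁, Sum.inl a₂)}).Adj (inl a) (inr b) := by
  rw [adj_G a₁ a₂ (ha := ha)]
  exact Or.inl ⟨a, b, rfl, rfl⟩

lemma adj_G_inr_inl (ha : a₁ ≠ a₂) (a : Fin n₁) (b : Fin n₂) :
    (completeBipartiteGraph (Fin n₁) (Fin n₂) ⊔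
      SimpleGraph.fromEdgeSet {s(Sum.inl a₁, Sum.inl a₂)}).Adj (inr b) (inl a) := by
  rw [adj_G a₁ a₂ (ha := ha)]
  exact Or.inr (Or.inl ⟨a, b, rfl, rfl⟩)

lemma adj_G_inr_inr (ha : a₁ ≠ a₂) (b b' : Fin n₂) :
    ¬ (completeBipartiteGraph (Fin n₁) (Fin n₂) ⊔
      SimpleGraph.fromEdgeSet {s(Sum.inl a₁, Sum.inl a₂)}).Adj (inr b) (inr b') := by
  rw [adj_G a₁ a₂ (ha := ha)]
  simp
end AO

namespace AO
open Sum Finset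

variable {n₁ n₂ : ℕ} (a₁ a₂ : Fin n₁)

lemma isOrientation_mkOr (ha : a₁ ≠ a₂) (S : Fin n₁ → Finset (Fin n₂)) (d : Bool) :
    IsOrientation (completeBipartiteGraph (Fin n₁) (Fin n₂) ⊔
      SimpleGraph.fromEdgeSet {s(Sum.inl a₁, Sum.inl a₂)}) (mkOr a₁ a₂ S d) := by
  constructor
  · intro u v huv
    rw [adj_G a₁ a₂ (ha := ha)] at huv
    rcases huv with ⟨a, b, rfl, rfl⟩ | ⟨a, b, rfl, rfl⟩ | ⟨rfl, rfl⟩ | ⟨rfl, rfl⟩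
    · simp [mkOr]
    · simp [mkOr]
    · simp [mkOr, ha, ha.symm]
    · simp [mkOr, ha, ha.symm]
  · intro u v huv
    rw [adj_G a₁ a₂ (ha := ha)] at huv
    push_neg at huv
    obtain ⟨h1, h2, h3, h4⟩ := huv
    rcases u with a | b <;> rcases v with a' | b'
    · simp only [mkOr]
      rw [if_neg, if_neg]
      · rintro ⟨rfl, rfl⟩; exact h4 rfl rfl
      · rintro ⟨rfl, rfl⟩; exact h3 rfl rfl
    · exact absurd rfl (h1 a b' rfl)
    · exact absurd rfl ((h2 a' b rfl))
    · simp [mkOr]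

lemma isOrientation_mkOrK (S : Fin n₁ → Finset (Fin n₂)) :
    IsOrientation (completeBipartiteGraph (Fin n₁) (Fin n₂)) (mkOrK S) := by
  constructor
  · rintro (a | b) (a' | b') huv <;> simp_all [mkOrK, completeBipartiteGraph_adj]
  · rintro (a | b) (a' | b') huv <;> simp_all [mkOrK, completeBipartiteGraph_adj]

lemma mkOr_Sof (ha : a₁ ≠ a₂) (f : V n₁ n₂ → V n₁ n₂ → Bool)
    (hf : IsOrientation (completeBipartiteGraph (Fin n₁) (Fin n₂) ⊔
      SimpleGraph.fromEdgeSet {s(Sum.inl a₁, Sum.inl a₂)}) f) :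
    mkOr a₁ a₂ (Sof f) (f (inl a₁) (inl a₂)) = f := by
  obtain ⟨h1, h2⟩ := hf
  funext u v
  rcases u with a | b <;> rcases v with a' | b'
  · simp only [mkOr]
    split_ifs with hc1 hc2
    · obtain ⟨rfl, rfl⟩ := hc1; rfl
    · obtain ⟨rfl, rfl⟩ := hc2
      rw [h1 _ _ ((adj_G_inl_inl _ _ ha _ _).mpr (Or.inr ⟨rfl, rfl⟩))]
    · rw [eq_comm]
      apply h2
      rw [adj_G_inl_inl a₁ a₂ ha]
      tauto
  · simp only [mkOr, mem_Sof]
    cases h : f (inl a) (inr b') <;> simp [h]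
  · simp only [mkOr, mem_Sof]
    rw [h1 _ _ (adj_G_inr_inl a₁ a₂ ha a' b)]
    cases h : f (inl a') (inr b) <;> simp [h]
  · simp only [mkOr]
    rw [eq_comm]
    apply h2
    exact adj_G_inr_inr a₁ a₂ ha b b'

end AO

namespace AO
open Sum Finset

variable {n₁ n₂ : ℕ} (a₁ a₂ : Fin n₁)

lemma Sof_mkOr (S : Fin n₁ → Finset (Fin n₂)) (d : Bool) : Sof (mkOr a₁ a₂ S d) = S := by
  funext a
  ext b
  simp [mkOr]

lemma Sof_mkOrK (S : Fin n₁ → Finset (Fin n₂)) : Sof (mkOrK S) = S := by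
  funext a
  ext b
  simp [mkOrK]

lemma mkOr_a₁a₂ (S : Fin n₁ → Finset (Fin n₂)) (d : Bool) :
    mkOr a₁ a₂ S d (inl a₁) (inl a₂) = d := by
  simp [mkOr]

lemma mkOrK_Sof (f : V n₁ n₂ → V n₁ n₂ → Bool)
    (hf : IsOrientation (completeBipartiteGraph (Fin n₁) (Fin n₂)) f) :
    mkOrK (Sof f) = f := by
  obtain ⟨h1, h2⟩ := hf
  funext u v
  rcases u with a | b <;> rcases v with a' | b'
  · rw [mkOrK, eq_comm]
    exact h2 _ _ (by simp [completeBipartiteGraph_adj])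
  · simp only [mkOrK, mem_Sof]
    cases h : f (inl a) (inr b') <;> simp [h]
  · simp only [mkOrK, mem_Sof]
    rw [h1 _ _ (by simp [completeBipartiteGraph_adj])]
    cases h : f (inl a') (inr b) <;> simp [h]
  · rw [mkOrK, eq_comm]
    exact h2 _ _ (by simp [completeBipartiteGraph_adj])

lemma chain_of_acyclic_mkOr {S : Fin n₁ → Finset (Fin n₂)} {d : Bool}
    (h : OrientAcyclic (mkOr a₁ a₂ S d)) : Chain S := by
  by_contra hS
  exact not_acyclic_of_not_chain (fun a b hb => by simp [mkOr, hb])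
    (fun a b hb => by simp [mkOr, hb]) hS h

lemma chain_of_acyclic_mkOrK {S : Fin n₁ → Finset (Fin n₂)}
    (h : OrientAcyclic (mkOrK S)) : Chain S := by
  by_contra hS
  exact not_acyclic_of_not_chain (fun a b hb => by simp [mkOrK, hb])
    (fun a b hb => by simp [mkOrK, hb]) hS h

lemma cond_of_acyclic_mkOr (ha : a₁ ≠ a₂) {S : Fin n₁ → Finset (Fin n₂)} {d : Bool}
    (h : OrientAcyclic (mkOr a₁ a₂ S d)) :
    if d then S a₂ ⊆ S a₁ else S a₁ ⊆ S a₂ := by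
  cases d with
  | true =>
    rw [if_pos rfl]
    intro b hb
    by_contra hb'
    have s1 : Relation.TransGen (fun u v : V n₁ n₂ => mkOr a₁ a₂ S true u v = true)
        (inl a₁) (inl a₂) := Relation.TransGen.single (by simp [mkOr])
    have s2 := s1.tail (show mkOr a₁ a₂ S true (inl a₂) (inr b) = true by simp [mkOr, hb])
    exact h _ (s2.tail (show mkOr a₁ a₂ S true (inr b) (inl a₁) = true by simp [mkOr, hb']))
  | false =>
    rw [if_neg (by simp)]
    intro b hb
    by_contra hb'
    have s1 : Relation.TransGen (fun u v : V n₁ n₂ => mkOr a₁ a₂ S false u v = true)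
        (inl a₂) (inl a₁) := Relation.TransGen.single (by simp [mkOr, ha, ha.symm])
    have s2 := s1.tail (show mkOr a₁ a₂ S false (inl a₁) (inr b) = true by simp [mkOr, hb])
    exact h _ (s2.tail (show mkOr a₁ a₂ S false (inr b) (inl a₂) = true by simp [mkOr, hb']))

lemma acyclic_mkOrK {S : Fin n₁ → Finset (Fin n₂)} (hS : Chain S) :
    OrientAcyclic (mkOrK S) := by
  apply acyclic_of_potential _ (Sum.elim (fun a => 2 * (S a).card) (fun b => 2 * mfun S b + 1))
  rintro (a | b) (a' | b') hf
  · simp [mkOrK] at hf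
  · simp only [mkOrK, decide_eq_true_eq] at hf
    have := mfun_lt hS hf
    simp only [Sum.elim_inl, Sum.elim_inr]
    omega
  · simp only [mkOrK, Bool.not_eq_true', decide_eq_false_iff_not] at hf
    have := le_mfun hf
    simp only [Sum.elim_inl, Sum.elim_inr]
    omega
  · simp [mkOrK] at hf

end AO

namespace AO
open Sum Finset

variable {n₁ n₂ : ℕ} (a₁ a₂ : Fin n₁)

lemma cardG (ha : a₁ ≠ a₂) :
    Nat.card {f : V n₁ n₂ → V n₁ n₂ → Bool //
        IsOrientation (completeBipartiteGraph (Fin n₁) (Fin n₂) ⊔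
          SimpleGraph.fromEdgeSet {s(Sum.inl a₁, Sum.inl a₂)}) f ∧ OrientAcyclic f} =
      Nat.card {p : (Fin n₁ → Finset (Fin n₂)) × Bool //
          Chain p.1 ∧ (if p.2 then p.1 a₂ ⊆ p.1 a₁ else p.1 a₁ ⊆ p.1 a₂)} := by
  apply Nat.card_congr
  refine ⟨fun f => ⟨(Sof f.1, f.1 (inl a₁) (inl a₂)), ?_⟩,
    fun p => ⟨mkOr a₁ a₂ p.1.1 p.1.2,
      isOrientation_mkOr a₁ a₂ ha _ _, acyclic_mkOr a₁ a₂ ha p.2.1 p.2.2⟩, ?_, ?_⟩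
  · obtain ⟨f, ho, hacy⟩ := f
    have e := mkOr_Sof a₁ a₂ ha f ho
    have hacy' : OrientAcyclic (mkOr a₁ a₂ (Sof f) (f (inl a₁) (inl a₂))) := e.symm ▸ hacy
    exact ⟨chain_of_acyclic_mkOr a₁ a₂ hacy', cond_of_acyclic_mkOr a₁ a₂ ha hacy'⟩
  · rintro ⟨f, ho, hacy⟩
    exact Subtype.ext (mkOr_Sof a₁ a₂ ha f ho)
  · rintro ⟨⟨S, d⟩, h⟩
    apply Subtype.ext
    exact Prod.ext (Sof_mkOr a₁ a₂ S d) (mkOr_a₁a₂ a₁ a₂ S d)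

lemma cardK :
    Nat.card {f : V n₁ n₂ → V n₁ n₂ → Bool //
        IsOrientation (completeBipartiteGraph (Fin n₁) (Fin n₂)) f ∧ OrientAcyclic f} =
      Nat.card {S : Fin n₁ → Finset (Fin n₂) // Chain S} := by
  apply Nat.card_congr
  refine ⟨fun f => ⟨Sof f.1, ?_⟩,
    fun S => ⟨mkOrK S.1, isOrientation_mkOrK _, acyclic_mkOrK S.2⟩, ?_, ?_⟩
  · obtain ⟨f, ho, hacy⟩ := f
    have e := mkOrK_Sof f ho
    exact chain_of_acyclic_mkOrK (e.symm ▸ hacy)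
  · rintro ⟨f, ho, hacy⟩
    exact Subtype.ext (mkOrK_Sof f ho)
  · rintro ⟨S, h⟩
    exact Subtype.ext (Sof_mkOrK S)

lemma cardSplit :
    Nat.card {p : (Fin n₁ → Finset (Fin n₂)) × Bool //
        Chain p.1 ∧ (if p.2 then p.1 a₂ ⊆ p.1 a₁ else p.1 a₁ ⊆ p.1 a₂)} =
      Nat.card {S : Fin n₁ → Finset (Fin n₂) // Chain S ∧ S a₂ ⊆ S a₁} +
      Nat.card {S : Fin n₁ → Finset (Fin n₂) // Chain S ∧ S a₁ ⊆ S a₂} := by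
  rw [← Nat.card_sum]
  apply Nat.card_congr
  refine ⟨fun p => ?_, fun q => ?_, ?_, ?_⟩
  · rcases p with ⟨⟨S, _ | _⟩, h⟩
    · exact Sum.inr ⟨S, by simpa using h⟩
    · exact Sum.inl ⟨S, by simpa using h⟩
  · rcases q with ⟨S, h⟩ | ⟨S, h⟩
    · exact ⟨(S, true), by simpa using h⟩
    · exact ⟨(S, false), by simpa using h⟩
  · rintro ⟨⟨S, _ | _⟩, h⟩ <;> rfl
  · rintro (⟨S, h⟩ | ⟨S, h⟩) <;> rfl

lemma cardUnionInter :
    Nat.card {S : Fin n₁ → Finset (Fin n₂) // Chain S ∧ S a₂ ⊆ S a₁} +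
      Nat.card {S : Fin n₁ → Finset (Fin n₂) // Chain S ∧ S a₁ ⊆ S a₂} =
      Nat.card {S : Fin n₁ → Finset (Fin n₂) // Chain S} +
      Nat.card {S : Fin n₁ → Finset (Fin n₂) // Chain S ∧ S a₁ = S a₂} := by
  simp only [Nat.card_eq_fintype_card, Fintype.card_subtype]
  rw [← Finset.card_inter_add_card_union, ← Finset.filter_and, ← Finset.filter_or, add_comm]
  congr 1
  · apply congrArg Finset.card
    apply Finset.filter_congr
    intro S _
    constructor
    · rintro (⟨hc, _⟩ | ⟨hc, _⟩) <;> exact hc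
    · intro hc
      rcases hc a₁ a₂ with h | h
      · exact Or.inr ⟨hc, h⟩
      · exact Or.inl ⟨hc, h⟩
  · apply congrArg Finset.card
    apply Finset.filter_congr
    intro S _
    constructor
    · rintro ⟨⟨hc, h1⟩, _, h2⟩
      exact ⟨hc, Finset.Subset.antisymm h2 h1⟩
    · rintro ⟨hc, he⟩
      exact ⟨⟨hc, he.ge⟩, hc, he.le⟩

end AO

namespace AO
open Sum Finset

variable {n₁ n₂ : ℕ}

lemma cardContract (a₁ a₂ : Fin n₁) (ha : a₁ ≠ a₂) :
    Nat.card {S : Fin n₁ → Finset (Fin n₂) // Chain S ∧ S a₁ = S a₂} =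
      Nat.card {T : Fin (n₁ - 1) → Finset (Fin n₂) // Chain T} := by
  have hcard : Fintype.card {x : Fin n₁ // x ≠ a₂} = n₁ - 1 := by
    simp [Fintype.card_subtype_compl, Fintype.card_subtype_eq]
  let e : Fin (n₁ - 1) ≃ {x : Fin n₁ // x ≠ a₂} := (Fintype.equivFinOfCardEq hcard).symm
  apply Nat.card_congr
  refine ⟨fun S => ⟨fun i => S.1 (e i).1, fun i j => S.2.1 _ _⟩,
    fun T => ⟨fun x => if hx : x = a₂ then T.1 (e.symm ⟨a₁, ha⟩) else T.1 (e.symm ⟨x, hx⟩),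
      ?_, ?_⟩, ?_, ?_⟩
  · intro x x'
    have key : ∀ y : Fin n₁,
        ∃ z, (if hy : y = a₂ then T.1 (e.symm ⟨a₁, ha⟩) else T.1 (e.symm ⟨y, hy⟩)) = T.1 z := by
      intro y
      split_ifs with h
      exacts [⟨_, rfl⟩, ⟨_, rfl⟩]
    obtain ⟨z, hz⟩ := key x
    obtain ⟨z', hz'⟩ := key x'
    beta_reduce
    rw [hz, hz']
    exact T.2 z z'
  · beta_reduce
    rw [dif_neg ha, dif_pos rfl]
  · rintro ⟨S, hc, he⟩
    apply Subtype.ext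
    funext x
    by_cases hx : x = a₂
    · subst hx
      simp only [dif_pos rfl]
      rw [Equiv.apply_symm_apply]
      exact he
    · simp only [dif_neg hx]
      rw [Equiv.apply_symm_apply]
  · rintro ⟨T, hT⟩
    apply Subtype.ext
    funext i
    simp only
    rw [dif_neg (e i).2, Subtype.coe_eta, Equiv.symm_apply_apply]

theorem main (n₁ n₂ : ℕ) (h₁ : 1 < n₁) (h₂ : 1 ≤ n₂)
    (a₁ a₂ : Fin n₁) (ha : a₁ ≠ a₂) :
    Nat.card {f : V n₁ n₂ → V n₁ n₂ → Bool //
        IsOrientation (completeBipartiteGraph (Fin n₁) (Fin n₂) ⊔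
          SimpleGraph.fromEdgeSet {s(Sum.inl a₁, Sum.inl a₂)}) f ∧ OrientAcyclic f} =
      Nat.card {f : V n₁ n₂ → V n₁ n₂ → Bool //
        IsOrientation (completeBipartiteGraph (Fin n₁) (Fin n₂)) f ∧ OrientAcyclic f} +
      Nat.card {f : V (n₁ - 1) n₂ → V (n₁ - 1) n₂ → Bool //
        IsOrientation (completeBipartiteGraph (Fin (n₁ - 1)) (Fin n₂)) f ∧ OrientAcyclic f} := by
  rw [cardG a₁ a₂ ha, cardSplit a₁ a₂, cardUnionInter a₁ a₂, cardK, cardK,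
    cardContract a₁ a₂ ha]

end AO

/-- If `G` is obtained from `K_{n₁,n₂}` (with `n₁ > 1`) by adding an edge joining two
vertices of the bipartite block of size `n₁`, then
`a(G) = a(K_{n₁,n₂}) + a(K_{n₁−1,n₂})`. -/
theorem acyclicOrientations_completeBipartite_addEdge (n₁ n₂ : ℕ) (h₁ : 1 < n₁) (h₂ : 1 ≤ n₂)
    (a₁ a₂ : Fin n₁) (ha : a₁ ≠ a₂) :
    numAcyclicOrientations
        (completeBipartiteGraph (Fin n₁) (Fin n₂) ⊔
          SimpleGraph.fromEdgeSet {s(Sum.inl a₁, Sum.inl a₂)}) =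
      numAcyclicOrientations (completeBipartiteGraph (Fin n₁) (Fin n₂)) +
        numAcyclicOrientations (completeBipartiteGraph (Fin (n₁ - 1)) (Fin n₂)) := by
  unfold numAcyclicOrientations
  exact AO.main n₁ n₂ h₁ h₂ a₁ a₂ ha
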